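/- Let X be a topological space with a continuous function h : X → [0,1] and points a < b in a linear order on X generating its topology, with h(a)=0, h(b)=1, h(x)=0 for x ≤ a, and h(x)=1 for x ≥ b. Then the function f defined by f(x) = sup{ h(t) : t ≤ x } is increasing, continuous, and satisfies f(a)=0 and f(b)=1. -/

import Mathlib

/-- Urysohn modification: f(x) = sup { h(t) : t ≤ x } is increasing, continuous,
with f(a)=0 and f(b)=1. -/
theorem sup_modification_increasing_continuous
    {X : Type*} [TopologicalSpace X] [LinearOrder X] [OrderTopology X] [CompactSpace X]
    (h : X → ℝ) (hc : Continuous h) (hrange : ∀ x, h x ∈ Set.Icc (0:ℝ) 1)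
    (a b : X) (hab : a < b) (ha : h a = 0) (hb : h b = 1)
    (h0 : ∀ x, x ≤ a → h x = 0) (h1 : ∀ x, b ≤ x → h x = 1)
    (f : X → ℝ) (hf : ∀ x, f x = sSup (h '' Set.Iic x)) :
    Monotone f ∧ Continuous f ∧ f a = 0 ∧ f b = 1 := by
  have hne : ∀ x : X, (h '' Set.Iic x).Nonempty := fun x => ⟨h x, x, le_rfl, rfl⟩
  have hbdd : ∀ x : X, BddAbove (h '' Set.Iic x) := fun x =>
    ⟨1, by rintro _ ⟨t, _, rfl⟩; exact (hrange t).2⟩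
  have hmono : Monotone f := by
    intro x y hxy
    rw [hf x, hf y]
    exact csSup_le_csSup (hbdd y) (hne x) (Set.image_mono (Set.Iic_subset_Iic.2 hxy))
  have hfa : f a = 0 := by
    rw [hf a]
    apply le_antisymm
    · apply csSup_le (hne a)
      rintro _ ⟨t, ht, rfl⟩
      exact le_of_eq (h0 t ht)
    · rw [← ha]; exact le_csSup (hbdd a) ⟨a, le_rfl, rfl⟩
  have hfb : f b = 1 := by
    rw [hf b]
    apply le_antisymm
    · apply csSup_le (hne b)
      rintro _ ⟨t, _, rfl⟩
      exact (hrange t).2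
    · rw [← hb]; exact le_csSup (hbdd b) ⟨b, le_rfl, rfl⟩
  refine ⟨hmono, ?_, hfa, hfb⟩
  -- Continuity: preimages of Iio c and Ioi c are open.
  have key_lt : ∀ c : ℝ, IsOpen {x : X | f x < c} := by
    intro c
    have hset : {x : X | f x < c} = {x : X | ∀ t ≤ x, h t < c} := by
      ext x
      constructor
      · intro hx t ht
        have hle : h t ≤ f x := by
          rw [hf x]; exact le_csSup (hbdd x) ⟨t, ht, rfl⟩
        exact lt_of_le_of_lt hle hx
      · intro hx
        obtain ⟨t0, ht0, ht0max⟩ :=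
          (isClosed_Iic (a := x)).isCompact.exists_isMaxOn ⟨x, le_rfl⟩ hc.continuousOn
        have : f x ≤ h t0 := by
          rw [hf x]
          apply csSup_le (hne x)
          rintro _ ⟨s, hs, rfl⟩
          exact ht0max hs
        exact lt_of_le_of_lt this (hx t0 ht0)
    rw [hset]
    have hU : IsOpen {t : X | h t < c} := isOpen_lt hc continuous_const
    by_cases hK : ({t : X | h t < c}ᶜ : Set X).Nonempty
    · obtain ⟨m, hmK, hmleast⟩ := (hU.isClosed_compl.isCompact).exists_isLeast hK
      have : {x : X | ∀ t ≤ x, h t < c} = Set.Iio m := by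
        ext x
        constructor
        · intro hx
          by_contra hxm
          exact hmK (hx m (le_of_not_gt hxm))
        · intro hxm t htx
          by_contra htc
          exact absurd (hmleast htc) (not_le.2 (lt_of_le_of_lt htx hxm))
      rw [this]; exact isOpen_Iio
    · have : {x : X | ∀ t ≤ x, h t < c} = Set.univ := by
        ext x
        simp only [Set.mem_setOf_eq, Set.mem_univ, iff_true]
        intro t _
        by_contra htc
        exact hK ⟨t, htc⟩
      rw [this]; exact isOpen_univ
  have key_gt : ∀ c : ℝ, IsOpen {x : X | c < f x} := by
    intro c
    have hset : {x : X | c < f x} =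
        {t : X | c < h t} ∪ ⋃ t ∈ {t : X | c < h t}, Set.Ioi t := by
      ext x
      simp only [Set.mem_setOf_eq, Set.mem_union, Set.mem_iUnion, Set.mem_Ioi,
        exists_prop]
      constructor
      · intro hx
        rw [hf x] at hx
        obtain ⟨_, ⟨t, ht, rfl⟩, hgt⟩ := exists_lt_of_lt_csSup (hne x) hx
        rcases eq_or_lt_of_le ht with rfl | hlt
        · exact Or.inl hgt
        · exact Or.inr ⟨t, hgt, hlt⟩
      · rintro (hx | ⟨t, htc, htx⟩)
        · rw [hf x]
          exact lt_of_lt_of_le hx (le_csSup (hbdd x) ⟨x, le_rfl, rfl⟩)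
        · rw [hf x]
          exact lt_of_lt_of_le htc (le_csSup (hbdd x) ⟨t, htx.le, rfl⟩)
    rw [hset]
    exact (isOpen_lt continuous_const hc).union (isOpen_biUnion fun t _ => isOpen_Ioi)
  rw [OrderTopology.topology_eq_generate_intervals (α := ℝ)]
  apply continuous_generateFrom_iff.mpr
  rintro s ⟨c, rfl | rfl⟩
  · exact key_gt c
  · exact key_lt c
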